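/- Let R = ℚ[x, x⁻¹] and let Y ∈ R[[u]] be the unique formal power series with constant term 0 satisfying Y = u·(1 + x⁻¹)·(x + Y)·(1 + Y). For i, j, m ∈ ℕ let h(i,j,m) denote the number of quadrant walks of length m from (1,0) to (i,j), where walks use the eight steps (1,0), (0,1), (−1,0), (0,−1), (1,−1), (−1,1), and two distinguishable stay steps (0,0)₁, (0,0)₂, and a quadrant walk is a walk all of whose points lie in {(a,b) ∈ ℤ² : a ≥ 0 and b ≥ 0}. Then in R[[u]] the identity x²·Y − x⁻²·Y³ + x⁻³·Y² = u·x(x+1)·F + u·x⁻¹(x⁻¹+1)·G holds, where F = Σ_{m≥0} (Σ_{i≥0} h(i,0,m)·xⁱ)·uᵐ and G = Σ_{m≥0} (Σ_{j≥0} h(0,j,m)·x⁻ʲ)·uᵐ. -/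

import Mathlib

open PowerSeries LaurentPolynomial

/-- The eight steps: `(1,0), (0,1), (−1,0), (0,−1), (1,−1), (−1,1)` and two
distinguishable stay steps `(0,0)₁`, `(0,0)₂`. -/
def braidStep : Fin 8 → ℤ × ℤ :=
  ![(1, 0), (0, 1), (-1, 0), (0, -1), (1, -1), (-1, 1), (0, 0), (0, 0)]

/-- The position after the first `i` steps of the walk `s`, started at `(1,0)`. -/
def walkPos (m : ℕ) (s : Fin m → Fin 8) (i : ℕ) : ℤ × ℤ :=
  (1, 0) + ∑ j ∈ Finset.univ.filter (fun j : Fin m => (j : ℕ) < i), braidStep (s j)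

/-- `h(i,j,m)` as a function of the target: the number of quadrant walks of length `m`
from `(1,0)` to `target`, using the eight steps above, all of whose points lie in the
closed first quadrant. -/
noncomputable def quadrantWalkCount (m : ℕ) (target : ℤ × ℤ) : ℕ :=
  Nat.card {s : Fin m → Fin 8 //
    (∀ i : ℕ, i ≤ m → 0 ≤ (walkPos m s i).1 ∧ 0 ≤ (walkPos m s i).2) ∧
    walkPos m s m = target}

/-- `F = Σ_m (Σ_i h(i,0,m) xⁱ) uᵐ`; the inner sum is finite since a walk of length `m`
starting at `(1,0)` ends at abscissa at most `m+1`. -/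
noncomputable def walkSeriesF : PowerSeries (LaurentPolynomial ℚ) :=
  PowerSeries.mk fun m =>
    ∑ i ∈ Finset.range (m + 2), (quadrantWalkCount m ((i : ℤ), 0)) • T (i : ℤ)

/-- `G = Σ_m (Σ_j h(0,j,m) x⁻ʲ) uᵐ`. -/
noncomputable def walkSeriesG : PowerSeries (LaurentPolynomial ℚ) :=
  PowerSeries.mk fun m =>
    ∑ j ∈ Finset.range (m + 2), (quadrantWalkCount m (0, (j : ℤ))) • T (-(j : ℤ))

set_option linter.unreachableTactic false
set_option linter.unusedTactic false
set_option linter.unusedVariables false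

abbrev Spoly := MvPolynomial (Fin 2) ℚ

def validWalk (m : ℕ) : Finset (Fin m → Fin 8) :=
  Finset.univ.filter (fun s => ∀ i ≤ m, 0 ≤ (walkPos m s i).1 ∧ 0 ≤ (walkPos m s i).2)

noncomputable def mono (p : ℤ × ℤ) : Spoly :=
  MvPolynomial.X 0 ^ p.1.toNat * MvPolynomial.X 1 ^ p.2.toNat

noncomputable def sigmaPoly : Spoly :=
  (1 + MvPolynomial.X 0) * (MvPolynomial.X 0 + MvPolynomial.X 1) * (1 + MvPolynomial.X 1)

lemma walkPos_snoc_le (m : ℕ) (s' : Fin m → Fin 8) (k : Fin 8) (i : ℕ) (hi : i ≤ m) :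
    walkPos (m + 1) (Fin.snoc s' k) i = walkPos m s' i := by
  unfold walkPos
  congr 1
  rw [Finset.sum_filter, Finset.sum_filter, Fin.sum_univ_castSucc]
  simp [Nat.not_lt.mpr hi]

lemma walkPos_snoc_top (m : ℕ) (s' : Fin m → Fin 8) (k : Fin 8) :
    walkPos (m + 1) (Fin.snoc s' k) (m + 1) = walkPos m s' m + braidStep k := by
  unfold walkPos
  rw [Finset.filter_true_of_mem (fun j _ => j.isLt),
    Finset.filter_true_of_mem (fun j _ => j.isLt), Fin.sum_univ_castSucc]
  simp [add_assoc]

lemma mem_valid_snoc {m : ℕ} {s' : Fin m → Fin 8} {k : Fin 8} :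
    Fin.snoc s' k ∈ validWalk (m + 1) ↔ s' ∈ validWalk m ∧
      0 ≤ (walkPos m s' m + braidStep k).1 ∧ 0 ≤ (walkPos m s' m + braidStep k).2 := by
  simp only [validWalk, Finset.mem_filter, Finset.mem_univ, true_and]
  constructor
  · intro h
    refine ⟨fun i hi => ?_, ?_⟩
    · rw [← walkPos_snoc_le m s' k i hi]; exact h i (hi.trans (Nat.le_succ m))
    · have := h (m + 1) le_rfl
      rwa [walkPos_snoc_top] at this
  · rintro ⟨h1, h2⟩ i hi
    rcases Nat.lt_succ_iff_lt_or_eq.mp (Nat.lt_succ_of_le hi) with h | h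
    · rw [walkPos_snoc_le m s' k i (by omega)]; exact h1 i (by omega)
    · subst h; rwa [walkPos_snoc_top]

lemma valid_end_nonneg {m : ℕ} {s : Fin m → Fin 8} (hs : s ∈ validWalk m) :
    0 ≤ (walkPos m s m).1 ∧ 0 ≤ (walkPos m s m).2 := by
  rw [validWalk, Finset.mem_filter] at hs
  exact hs.2 m le_rfl

lemma P_succ (m : ℕ) :
    (∑ s ∈ validWalk (m + 1), mono (walkPos (m + 1) s (m + 1))) =
      ∑ s ∈ validWalk m, ∑ k : Fin 8,
        if 0 ≤ (walkPos m s m + braidStep k).1 ∧ 0 ≤ (walkPos m s m + braidStep k).2 then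
          mono (walkPos m s m + braidStep k) else 0 := by
  classical
  have hsum : (∑ s ∈ validWalk (m + 1), mono (walkPos (m + 1) s (m + 1)))
      = ∑ s : Fin (m + 1) → Fin 8,
          if s ∈ validWalk (m + 1) then mono (walkPos (m + 1) s (m + 1)) else 0 := by
    rw [Finset.sum_ite_mem, Finset.univ_inter]
  have hrhs : (∑ s ∈ validWalk m, ∑ k : Fin 8,
        if 0 ≤ (walkPos m s m + braidStep k).1 ∧ 0 ≤ (walkPos m s m + braidStep k).2 then
          mono (walkPos m s m + braidStep k) else 0)
      = ∑ s' : Fin m → Fin 8, if s' ∈ validWalk m then (∑ k : Fin 8,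
          if 0 ≤ (walkPos m s' m + braidStep k).1 ∧ 0 ≤ (walkPos m s' m + braidStep k).2 then
            mono (walkPos m s' m + braidStep k) else 0) else 0 := by
    rw [Finset.sum_ite_mem, Finset.univ_inter]
  rw [hsum, hrhs, ← (Fin.snocEquiv (fun _ => Fin 8)).sum_comp, Fintype.sum_prod_type,
    Finset.sum_comm]
  refine Finset.sum_congr rfl fun s' _ => ?_
  by_cases hv : s' ∈ validWalk m
  · rw [if_pos hv]
    refine Finset.sum_congr rfl fun k _ => ?_
    show (if Fin.snoc s' k ∈ validWalk (m+1) then mono (walkPos (m+1) (Fin.snoc s' k) (m+1))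
      else 0) = _
    rw [walkPos_snoc_top]
    by_cases hc : 0 ≤ (walkPos m s' m + braidStep k).1 ∧ 0 ≤ (walkPos m s' m + braidStep k).2
    · rw [if_pos (mem_valid_snoc.mpr ⟨hv, hc⟩), if_pos hc]
    · rw [if_neg (fun h => hc (mem_valid_snoc.mp h).2), if_neg hc]
  · rw [if_neg hv]
    refine Finset.sum_eq_zero fun k _ => ?_
    show (if Fin.snoc s' k ∈ validWalk (m+1) then mono (walkPos (m+1) (Fin.snoc s' k) (m+1))
      else 0) = 0
    rw [if_neg (fun h => hv (mem_valid_snoc.mp h).1)]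

lemma mono_natCast (a b : ℕ) :
    mono ((a : ℤ), (b : ℤ)) = MvPolynomial.X 0 ^ a * MvPolynomial.X 1 ^ b := by
  simp [mono]

lemma step_identity (e : ℤ × ℤ) (h1 : 0 ≤ e.1) (h2 : 0 ≤ e.2) :
    (MvPolynomial.X 0 * MvPolynomial.X 1 : Spoly) *
      (∑ k : Fin 8, if 0 ≤ (e + braidStep k).1 ∧ 0 ≤ (e + braidStep k).2 then
          mono (e + braidStep k) else 0)
    = sigmaPoly * mono e
      - (MvPolynomial.X 1 + MvPolynomial.X 1 ^ 2) *
          (if e.1 = 0 then MvPolynomial.X 1 ^ e.2.toNat else 0)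
      - (MvPolynomial.X 0 + MvPolynomial.X 0 ^ 2) *
          (if e.2 = 0 then MvPolynomial.X 0 ^ e.1.toNat else 0) := by
  have b0 : braidStep 0 = (1, 0) := rfl
  have b1 : braidStep 1 = (0, 1) := rfl
  have b2 : braidStep 2 = (-1, 0) := rfl
  have b3 : braidStep 3 = (0, -1) := rfl
  have b4 : braidStep 4 = (1, -1) := rfl
  have b5 : braidStep 5 = (-1, 1) := rfl
  have b6 : braidStep 6 = (0, 0) := rfl
  have b7 : braidStep 7 = (0, 0) := rfl
  obtain ⟨x, y⟩ := e
  simp only at h1 h2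
  obtain ⟨a, rfl⟩ : ∃ a : ℕ, x = (a : ℤ) := ⟨x.toNat, (Int.toNat_of_nonneg h1).symm⟩
  obtain ⟨b, rfl⟩ : ∃ b : ℕ, y = (b : ℤ) := ⟨y.toNat, (Int.toNat_of_nonneg h2).symm⟩
  have hneg : ¬ (0 : ℤ) ≤ -1 := by norm_num
  rcases a with _ | A <;> rcases b with _ | B
  · have z1 : ((0 : ℕ) : ℤ) + 1 = ((1 : ℕ) : ℤ) := by norm_num
    have z2 : ((0 : ℕ) : ℤ) + (-1) = -1 := by norm_num
    simp only [Fin.sum_univ_eight, b0, b1, b2, b3, b4, b5, b6, b7, Prod.mk_add_mk, add_zero,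
      z1, z2]
    simp only [mono_natCast]
    simp [Int.natCast_nonneg, hneg]
    simp only [sigmaPoly]
    ring
  · have z1 : ((0 : ℕ) : ℤ) + 1 = ((1 : ℕ) : ℤ) := by norm_num
    have z2 : ((0 : ℕ) : ℤ) + (-1) = -1 := by norm_num
    have e3 : ((B + 1 : ℕ) : ℤ) + 1 = ((B + 2 : ℕ) : ℤ) := by push_cast; ring
    have e4 : ((B + 1 : ℕ) : ℤ) + (-1) = ((B : ℕ) : ℤ) := by push_cast; ring
    simp only [Fin.sum_univ_eight, b0, b1, b2, b3, b4, b5, b6, b7, Prod.mk_add_mk, add_zero,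
      z1, z2, e3, e4]
    simp only [mono_natCast, Int.toNat_natCast, Int.natCast_nonneg, Nat.cast_eq_zero,
      Nat.add_one_ne_zero, hneg, and_self, and_true, true_and, false_and, and_false,
      if_true, if_false, ite_true, ite_false, eq_self_iff_true, not_false_eq_true]
    simp only [sigmaPoly]
    first | ring1 | (split_ifs <;> first | ring1 | (exfalso; omega))
  · have z1 : ((0 : ℕ) : ℤ) + 1 = ((1 : ℕ) : ℤ) := by norm_num
    have z2 : ((0 : ℕ) : ℤ) + (-1) = -1 := by norm_num
    have e1 : ((A + 1 : ℕ) : ℤ) + 1 = ((A + 2 : ℕ) : ℤ) := by push_cast; ring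
    have e2 : ((A + 1 : ℕ) : ℤ) + (-1) = ((A : ℕ) : ℤ) := by push_cast; ring
    simp only [Fin.sum_univ_eight, b0, b1, b2, b3, b4, b5, b6, b7, Prod.mk_add_mk, add_zero,
      z1, z2, e1, e2]
    simp only [mono_natCast, Int.toNat_natCast, Int.natCast_nonneg, Nat.cast_eq_zero,
      Nat.add_one_ne_zero, hneg, and_self, and_true, true_and, false_and, and_false,
      if_true, if_false, ite_true, ite_false, eq_self_iff_true, not_false_eq_true]
    simp only [sigmaPoly]
    first | ring1 | (split_ifs <;> first | ring1 | (exfalso; omega))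
  · have e1 : ((A + 1 : ℕ) : ℤ) + 1 = ((A + 2 : ℕ) : ℤ) := by push_cast; ring
    have e2 : ((A + 1 : ℕ) : ℤ) + (-1) = ((A : ℕ) : ℤ) := by push_cast; ring
    have e3 : ((B + 1 : ℕ) : ℤ) + 1 = ((B + 2 : ℕ) : ℤ) := by push_cast; ring
    have e4 : ((B + 1 : ℕ) : ℤ) + (-1) = ((B : ℕ) : ℤ) := by push_cast; ring
    simp only [Fin.sum_univ_eight, b0, b1, b2, b3, b4, b5, b6, b7, Prod.mk_add_mk, add_zero,
      e1, e2, e3, e4]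
    simp only [mono_natCast, Int.toNat_natCast, Int.natCast_nonneg, Nat.cast_eq_zero,
      Nat.add_one_ne_zero, hneg, and_self, and_true, true_and, false_and, and_false,
      if_true, if_false, ite_true, ite_false, eq_self_iff_true, not_false_eq_true]
    simp only [sigmaPoly]
    first | ring1 | (split_ifs <;> first | ring1 | (exfalso; omega))

noncomputable def Pcoeff (m : ℕ) : Spoly := ∑ s ∈ validWalk m, mono (walkPos m s m)

noncomputable def Qcoeff (m : ℕ) : Spoly :=
  ∑ s ∈ (validWalk m).filter (fun s => (walkPos m s m).1 = 0),
    MvPolynomial.X 1 ^ (walkPos m s m).2.toNat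

noncomputable def Rcoeff (m : ℕ) : Spoly :=
  ∑ s ∈ (validWalk m).filter (fun s => (walkPos m s m).2 = 0),
    MvPolynomial.X 0 ^ (walkPos m s m).1.toNat

lemma recurrence (m : ℕ) :
    (MvPolynomial.X 0 * MvPolynomial.X 1 : Spoly) * Pcoeff (m + 1) =
      sigmaPoly * Pcoeff m - (MvPolynomial.X 1 + MvPolynomial.X 1 ^ 2) * Qcoeff m
        - (MvPolynomial.X 0 + MvPolynomial.X 0 ^ 2) * Rcoeff m := by
  classical
  rw [Pcoeff, P_succ, Finset.mul_sum]
  have : ∀ s ∈ validWalk m,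
      (MvPolynomial.X 0 * MvPolynomial.X 1 : Spoly) * ∑ k : Fin 8,
        (if 0 ≤ (walkPos m s m + braidStep k).1 ∧ 0 ≤ (walkPos m s m + braidStep k).2 then
          mono (walkPos m s m + braidStep k) else 0)
      = sigmaPoly * mono (walkPos m s m)
        - (MvPolynomial.X 1 + MvPolynomial.X 1 ^ 2) *
            (if (walkPos m s m).1 = 0 then MvPolynomial.X 1 ^ (walkPos m s m).2.toNat else 0)
        - (MvPolynomial.X 0 + MvPolynomial.X 0 ^ 2) *
            (if (walkPos m s m).2 = 0 then MvPolynomial.X 0 ^ (walkPos m s m).1.toNat else 0) := by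
    intro s hs
    exact step_identity _ (valid_end_nonneg hs).1 (valid_end_nonneg hs).2
  have hP : ∑ s ∈ validWalk m, sigmaPoly * mono (walkPos m s m) = sigmaPoly * Pcoeff m := by
    rw [Pcoeff, Finset.mul_sum]
  have hQ : (∑ s ∈ validWalk m, (MvPolynomial.X 1 + MvPolynomial.X 1 ^ 2) *
      (if (walkPos m s m).1 = 0 then MvPolynomial.X 1 ^ (walkPos m s m).2.toNat else 0))
      = (MvPolynomial.X 1 + MvPolynomial.X 1 ^ 2) * Qcoeff m := by
    rw [Qcoeff, Finset.sum_filter, Finset.mul_sum]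
  have hR : (∑ s ∈ validWalk m, (MvPolynomial.X 0 + MvPolynomial.X 0 ^ 2) *
      (if (walkPos m s m).2 = 0 then MvPolynomial.X 0 ^ (walkPos m s m).1.toNat else 0))
      = (MvPolynomial.X 0 + MvPolynomial.X 0 ^ 2) * Rcoeff m := by
    rw [Rcoeff, Finset.sum_filter, Finset.mul_sum]
  rw [Finset.sum_congr rfl this, Finset.sum_sub_distrib, Finset.sum_sub_distrib, hP, hQ, hR]

lemma Pcoeff_zero : Pcoeff 0 = MvPolynomial.X 0 := by
  classical
  have hpos : ∀ (s : Fin 0 → Fin 8) (i : ℕ), walkPos 0 s i = (1, 0) := by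
    intro s i
    simp [walkPos]
  have hval : validWalk 0 = Finset.univ := by
    rw [validWalk, Finset.filter_true_of_mem]
    intro s _ i _
    rw [hpos]
    norm_num
  rw [Pcoeff, hval]
  rw [Finset.sum_congr rfl fun s _ => by rw [hpos s 0]]
  rw [Finset.sum_const]
  have : (Finset.univ : Finset (Fin 0 → Fin 8)).card = 1 := by simp
  rw [this, one_smul]
  simp [mono]

noncomputable def Hser : PowerSeries Spoly := PowerSeries.mk Pcoeff
noncomputable def Qser : PowerSeries Spoly := PowerSeries.mk Qcoeff
noncomputable def Rser : PowerSeries Spoly := PowerSeries.mk Rcoeff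

lemma master :
    PowerSeries.C (R := Spoly) (MvPolynomial.X 0 * MvPolynomial.X 1) * Hser =
      PowerSeries.C (R := Spoly) (MvPolynomial.X 0 ^ 2 * MvPolynomial.X 1) +
        PowerSeries.X * (PowerSeries.C (R := Spoly) sigmaPoly * Hser
          - PowerSeries.C (R := Spoly) (MvPolynomial.X 1 + MvPolynomial.X 1 ^ 2) * Qser
          - PowerSeries.C (R := Spoly) (MvPolynomial.X 0 + MvPolynomial.X 0 ^ 2) * Rser) := by
  refine PowerSeries.ext fun n => ?_
  rcases n with _ | m
  · have h0 : (PowerSeries.constantCoeff (R := Spoly)) Hser = Pcoeff 0 := by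
      rw [Hser, ← PowerSeries.coeff_zero_eq_constantCoeff_apply, PowerSeries.coeff_mk]
    simp only [PowerSeries.coeff_zero_eq_constantCoeff, map_mul, map_add, map_sub,
      PowerSeries.constantCoeff_C, PowerSeries.constantCoeff_X, zero_mul, add_zero]
    rw [h0, Pcoeff_zero]
    ring
  · rw [map_add, PowerSeries.coeff_succ_X_mul]
    simp only [PowerSeries.coeff_C_mul, map_sub, PowerSeries.coeff_C, Hser, Qser, Rser,
      PowerSeries.coeff_mk, Nat.succ_ne_zero, if_false, add_zero, PowerSeries.coeff_C_mul]
    rw [← recurrence]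
    ring



section EvalHom

variable {S B : Type*} [CommRing S] [CommRing B] (φ : S →+* PowerSeries B)

/-- Substitute the coefficients via `φ` and the series variable by itself. -/
noncomputable def evalFun (f : PowerSeries S) : PowerSeries B :=
  PowerSeries.mk fun n => ∑ m ∈ Finset.range (n + 1),
    PowerSeries.coeff (R := B) (n - m) (φ (PowerSeries.coeff (R := S) m f))

lemma coeff_evalFun (f : PowerSeries S) (n : ℕ) :
    PowerSeries.coeff (R := B) n (evalFun φ f) =
      ∑ m ∈ Finset.range (n + 1), PowerSeries.coeff (R := B) (n - m) (φ (PowerSeries.coeff (R := S) m f)) := by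
  simp [evalFun]

lemma evalFun_congr_coeff {f g : PowerSeries S} {n : ℕ}
    (h : ∀ m ≤ n, PowerSeries.coeff (R := S) m f = PowerSeries.coeff (R := S) m g) :
    PowerSeries.coeff (R := B) n (evalFun φ f) = PowerSeries.coeff (R := B) n (evalFun φ g) := by
  rw [coeff_evalFun, coeff_evalFun]
  refine Finset.sum_congr rfl fun m hm => ?_
  rw [h m (Nat.lt_succ_iff.mp (Finset.mem_range.mp hm))]

lemma evalFun_add (f g : PowerSeries S) :
    evalFun φ (f + g) = evalFun φ f + evalFun φ g := by
  ext n
  simp [coeff_evalFun, Finset.sum_add_distrib]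

lemma evalFun_coe (p : Polynomial S) :
    evalFun φ (p : PowerSeries S) = p.eval₂ φ PowerSeries.X := by
  induction p using Polynomial.induction_on' with
  | add p q hp hq =>
      rw [Polynomial.coe_add, evalFun_add, hp, hq, Polynomial.eval₂_add]
  | monomial d a =>
      rw [Polynomial.eval₂_monomial]
      ext n
      rw [coeff_evalFun, PowerSeries.coeff_mul_X_pow']
      have : ∀ m : ℕ, PowerSeries.coeff (R := B) (n - m)
          (φ (PowerSeries.coeff (R := S) m ((Polynomial.monomial d a : Polynomial S) : PowerSeries S)))
          = if m = d then PowerSeries.coeff (R := B) (n - d) (φ a) else 0 := by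
        intro m
        rw [Polynomial.coeff_coe, Polynomial.coeff_monomial]
        by_cases h : m = d
        · subst h; rw [if_pos rfl, if_pos rfl]
        · rw [if_neg (fun hh => h hh.symm), if_neg h, map_zero, map_zero]
      rw [Finset.sum_congr rfl fun m _ => this m, Finset.sum_ite_eq' (Finset.range (n+1)) d]
      simp only [Finset.mem_range, Nat.lt_succ_iff]

lemma evalFun_mul (f g : PowerSeries S) :
    evalFun φ (f * g) = evalFun φ f * evalFun φ g := by
  ext n
  set F := PowerSeries.trunc (n + 1) f with hF
  set G := PowerSeries.trunc (n + 1) g with hG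
  have hf : ∀ m ≤ n, PowerSeries.coeff (R := S) m (F : PowerSeries S) = PowerSeries.coeff (R := S) m f := by
    intro m hm
    rw [Polynomial.coeff_coe, PowerSeries.coeff_trunc, if_pos (Nat.lt_succ_of_le hm)]
  have hg : ∀ m ≤ n, PowerSeries.coeff (R := S) m (G : PowerSeries S) = PowerSeries.coeff (R := S) m g := by
    intro m hm
    rw [Polynomial.coeff_coe, PowerSeries.coeff_trunc, if_pos (Nat.lt_succ_of_le hm)]
  have h1 : PowerSeries.coeff (R := B) n (evalFun φ (f * g)) =
      PowerSeries.coeff (R := B) n (evalFun φ ((F * G : Polynomial S) : PowerSeries S)) := by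
    refine evalFun_congr_coeff φ fun m hm => ?_
    rw [Polynomial.coe_mul, PowerSeries.coeff_mul, PowerSeries.coeff_mul]
    refine Finset.sum_congr rfl fun p hp => ?_
    obtain ⟨h1', h2'⟩ := Finset.HasAntidiagonal.antidiagonal.fst_le hp, Finset.HasAntidiagonal.antidiagonal.snd_le hp
    rw [hf _ (le_trans (Finset.HasAntidiagonal.antidiagonal.fst_le hp) hm),
        hg _ (le_trans (Finset.HasAntidiagonal.antidiagonal.snd_le hp) hm)]
  rw [h1, evalFun_coe, Polynomial.eval₂_mul, ← evalFun_coe φ F, ← evalFun_coe φ G,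
    PowerSeries.coeff_mul, PowerSeries.coeff_mul]
  refine Finset.sum_congr rfl fun p hp => ?_
  rw [evalFun_congr_coeff φ (g := f) fun m hm =>
        hf m (le_trans hm (Finset.HasAntidiagonal.antidiagonal.fst_le hp)),
      evalFun_congr_coeff φ (g := g) fun m hm =>
        hg m (le_trans hm (Finset.HasAntidiagonal.antidiagonal.snd_le hp))]

/-- The evaluation ring homomorphism `S⟦u⟧ → B⟦u⟧` sending `C a ↦ φ a` and `u ↦ u`. -/
noncomputable def evalHom : PowerSeries S →+* PowerSeries B where
  toFun := evalFun φ
  map_one' := by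
    rw [← Polynomial.coe_one, evalFun_coe, Polynomial.eval₂_one]
  map_mul' := evalFun_mul φ
  map_zero' := by
    show evalFun φ 0 = 0
    ext n
    simp [coeff_evalFun]
  map_add' := evalFun_add φ

lemma evalHom_C (a : S) : evalHom φ (PowerSeries.C (R := S) a) = φ a := by
  show evalFun φ _ = _
  rw [← Polynomial.coe_C, evalFun_coe, Polynomial.eval₂_C]

lemma evalHom_X : evalHom φ PowerSeries.X = PowerSeries.X := by
  show evalFun φ _ = _
  rw [← Polynomial.coe_X, evalFun_coe, Polynomial.eval₂_X]

lemma evalHom_mk_congr {φ' : S →+* PowerSeries B} (f : PowerSeries S)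
    (h : ∀ m, φ (PowerSeries.coeff (R := S) m f) = φ' (PowerSeries.coeff (R := S) m f)) :
    evalHom φ f = evalHom φ' f := by
  ext n
  show PowerSeries.coeff (R := B) n (evalFun φ f) = PowerSeries.coeff (R := B) n (evalFun φ' f)
  rw [coeff_evalFun, coeff_evalFun]
  exact Finset.sum_congr rfl fun m _ => by rw [h m]

lemma evalHom_comp_C (ρ : S →+* B) (f : PowerSeries S) :
    evalHom ((PowerSeries.C (R := B)).comp ρ) f = PowerSeries.mk fun n => ρ (PowerSeries.coeff (R := S) n f) := by
  ext n
  show PowerSeries.coeff (R := B) n (evalFun _ f) = _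
  rw [coeff_evalFun, PowerSeries.coeff_mk]
  have : ∀ m ∈ Finset.range (n + 1), PowerSeries.coeff (R := B) (n - m)
      (((PowerSeries.C (R := B)).comp ρ) (PowerSeries.coeff (R := S) m f)) =
      if m = n then ρ (PowerSeries.coeff (R := S) n f) else 0 := by
    intro m hm
    rw [Finset.mem_range, Nat.lt_succ_iff] at hm
    simp only [RingHom.comp_apply, PowerSeries.coeff_C]
    split_ifs with h1 h2 h2
    · subst h2; rfl
    · exact absurd (by omega : m = n) h2
    · exact absurd (by omega : n - m = 0) h1
    · rfl
  rw [Finset.sum_congr rfl this, Finset.sum_ite_eq' (Finset.range (n+1)) n]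
  rw [if_pos (Finset.self_mem_range_succ n)]

end EvalHom

lemma quadrantWalkCount_eq (m : ℕ) (t : ℤ × ℤ) :
    quadrantWalkCount m t = ((validWalk m).filter (fun s => walkPos m s m = t)).card := by
  classical
  rw [quadrantWalkCount, Nat.card_eq_fintype_card, Fintype.card_subtype, validWalk,
    Finset.filter_filter]

lemma walk_end_bound (m : ℕ) (s : Fin m → Fin 8) :
    (walkPos m s m).1 ≤ m + 1 ∧ (walkPos m s m).2 ≤ m + 1 := by
  have hstep : ∀ k : Fin 8, (braidStep k).1 ≤ 1 ∧ (braidStep k).2 ≤ 1 := by decide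
  have hcard : ((Finset.univ.filter (fun j : Fin m => (j : ℕ) < m)).card : ℤ) ≤ (m : ℤ) := by
    exact_mod_cast (Finset.card_filter_le _ _).trans (by simp)
  have hsum1 : (∑ j ∈ Finset.univ.filter (fun j : Fin m => (j : ℕ) < m), braidStep (s j)).1
      ≤ m := by
    rw [Prod.fst_sum]
    calc (∑ j ∈ Finset.univ.filter (fun j : Fin m => (j : ℕ) < m), (braidStep (s j)).1)
        ≤ ∑ _j ∈ Finset.univ.filter (fun j : Fin m => (j : ℕ) < m), (1 : ℤ) :=
          Finset.sum_le_sum fun j _ => (hstep (s j)).1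
      _ ≤ m := by rw [Finset.sum_const, nsmul_eq_mul, mul_one]; exact hcard
  have hsum2 : (∑ j ∈ Finset.univ.filter (fun j : Fin m => (j : ℕ) < m), braidStep (s j)).2
      ≤ m := by
    rw [Prod.snd_sum]
    calc (∑ j ∈ Finset.univ.filter (fun j : Fin m => (j : ℕ) < m), (braidStep (s j)).2)
        ≤ ∑ _j ∈ Finset.univ.filter (fun j : Fin m => (j : ℕ) < m), (1 : ℤ) :=
          Finset.sum_le_sum fun j _ => (hstep (s j)).2
      _ ≤ m := by rw [Finset.sum_const, nsmul_eq_mul, mul_one]; exact hcard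
  constructor
  · show ((1,0) + _ : ℤ × ℤ).1 ≤ _
    rw [Prod.fst_add]
    push_cast
    omega
  · show ((1,0) + _ : ℤ × ℤ).2 ≤ _
    rw [Prod.snd_add]
    push_cast
    omega

noncomputable def rhoF : Spoly →+* LaurentPolynomial ℚ :=
  (MvPolynomial.aeval ![T 1, 0]).toRingHom

noncomputable def rhoG : Spoly →+* LaurentPolynomial ℚ :=
  (MvPolynomial.aeval ![0, T (-1)]).toRingHom

lemma evalR_walkSeriesF :
    (PowerSeries.mk fun n => rhoF (Rcoeff n)) = walkSeriesF := by
  classical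
  refine PowerSeries.ext fun m => ?_
  rw [PowerSeries.coeff_mk, walkSeriesF, PowerSeries.coeff_mk]
  rw [Rcoeff, map_sum]
  have hterm : ∀ s ∈ (validWalk m).filter (fun s => (walkPos m s m).2 = 0),
      rhoF (MvPolynomial.X 0 ^ (walkPos m s m).1.toNat) = T ((walkPos m s m).1.toNat : ℤ) := by
    intro s _
    rw [map_pow]
    show (MvPolynomial.aeval ![T 1, 0] (MvPolynomial.X 0)) ^ _ = _
    rw [MvPolynomial.aeval_X]
    simp [T_pow]
  rw [Finset.sum_congr rfl hterm]
  rw [← Finset.sum_fiberwise_of_maps_to (g := fun s => (walkPos m s m).1.toNat)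
      (t := Finset.range (m + 2)) (fun s hs => by
        rw [Finset.mem_range]
        show (walkPos m s m).1.toNat < m + 2
        have := (walk_end_bound m s).1
        omega)]
  refine Finset.sum_congr rfl fun i hi => ?_
  have hT : ∀ s ∈ ((validWalk m).filter (fun s => (walkPos m s m).2 = 0)).filter
      (fun s => (walkPos m s m).1.toNat = i), T (((walkPos m s m).1.toNat : ℤ)) = (T (i : ℤ) : LaurentPolynomial ℚ) := by
    intro s hs
    rw [Finset.mem_filter] at hs
    rw [hs.2]
  rw [Finset.sum_congr rfl hT, Finset.sum_const, quadrantWalkCount_eq]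
  congr 2
  rw [Finset.filter_filter]
  refine Finset.filter_congr fun s hs => ?_
  have h1 := (valid_end_nonneg hs).1
  constructor
  · rintro ⟨h2, h3⟩
    have h4 : (walkPos m s m).1 = (i : ℤ) := by omega
    exact Prod.ext h4 h2
  · intro h
    rw [h]
    exact ⟨rfl, by simp⟩

lemma evalQ_walkSeriesG :
    (PowerSeries.mk fun n => rhoG (Qcoeff n)) = walkSeriesG := by
  classical
  refine PowerSeries.ext fun m => ?_
  rw [PowerSeries.coeff_mk, walkSeriesG, PowerSeries.coeff_mk]
  rw [Qcoeff, map_sum]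
  have hterm : ∀ s ∈ (validWalk m).filter (fun s => (walkPos m s m).1 = 0),
      rhoG (MvPolynomial.X 1 ^ (walkPos m s m).2.toNat)
        = T (-((walkPos m s m).2.toNat : ℤ)) := by
    intro s _
    rw [map_pow]
    show (MvPolynomial.aeval ![0, T (-1)] (MvPolynomial.X 1)) ^ _ = _
    rw [MvPolynomial.aeval_X]
    simp [T_pow]
  rw [Finset.sum_congr rfl hterm]
  rw [← Finset.sum_fiberwise_of_maps_to (g := fun s => (walkPos m s m).2.toNat)
      (t := Finset.range (m + 2)) (fun s hs => by
        rw [Finset.mem_range]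
        show (walkPos m s m).2.toNat < m + 2
        have := (walk_end_bound m s).2
        omega)]
  refine Finset.sum_congr rfl fun j hj => ?_
  have hT : ∀ s ∈ ((validWalk m).filter (fun s => (walkPos m s m).1 = 0)).filter
      (fun s => (walkPos m s m).2.toNat = j),
      T (-((walkPos m s m).2.toNat : ℤ)) = (T (-(j : ℤ)) : LaurentPolynomial ℚ) := by
    intro s hs
    rw [Finset.mem_filter] at hs
    rw [hs.2]
  rw [Finset.sum_congr rfl hT, Finset.sum_const, quadrantWalkCount_eq]
  congr 2
  rw [Finset.filter_filter]
  refine Finset.filter_congr fun s hs => ?_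
  have h2 := (valid_end_nonneg hs).2
  constructor
  · rintro ⟨h3, h4⟩
    have h5 : (walkPos m s m).2 = (j : ℤ) := by omega
    exact Prod.ext h3 h5
  · intro h
    rw [h]
    exact ⟨rfl, by simp⟩

noncomputable def phiAB (A B : PowerSeries (LaurentPolynomial ℚ)) :
    Spoly →+* PowerSeries (LaurentPolynomial ℚ) :=
  (MvPolynomial.aeval ![A, B]).toRingHom

lemma phiAB_X0 (A B : PowerSeries (LaurentPolynomial ℚ)) :
    phiAB A B (MvPolynomial.X 0) = A := by
  simp [phiAB]

lemma phiAB_X1 (A B : PowerSeries (LaurentPolynomial ℚ)) :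
    phiAB A B (MvPolynomial.X 1) = B := by
  simp [phiAB]

lemma subst_master (A B : PowerSeries (LaurentPolynomial ℚ)) :
    A * B * evalHom (phiAB A B) Hser =
      A ^ 2 * B + PowerSeries.X * ((1 + A) * (A + B) * (1 + B) * evalHom (phiAB A B) Hser
        - (B + B ^ 2) * evalHom (phiAB A B) Qser
        - (A + A ^ 2) * evalHom (phiAB A B) Rser) := by
  have h := congrArg (evalHom (phiAB A B)) master
  simp only [map_mul, map_add, map_sub, map_pow, map_one, evalHom_C, evalHom_X,
    phiAB_X0, phiAB_X1, sigmaPoly] at h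
  linear_combination h

lemma evalQ_indep (A A' B : PowerSeries (LaurentPolynomial ℚ)) :
    evalHom (phiAB A B) Qser = evalHom (phiAB A' B) Qser := by
  refine evalHom_mk_congr _ _ fun m => ?_
  rw [Qser, PowerSeries.coeff_mk, Qcoeff, map_sum, map_sum]
  exact Finset.sum_congr rfl fun s _ => by rw [map_pow, map_pow, phiAB_X1, phiAB_X1]

lemma evalR_indep (A B B' : PowerSeries (LaurentPolynomial ℚ)) :
    evalHom (phiAB A B) Rser = evalHom (phiAB A B') Rser := by
  refine evalHom_mk_congr _ _ fun m => ?_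
  rw [Rser, PowerSeries.coeff_mk, Rcoeff, map_sum, map_sum]
  exact Finset.sum_congr rfl fun s _ => by rw [map_pow, map_pow, phiAB_X0, phiAB_X0]

lemma evalR_F (B : PowerSeries (LaurentPolynomial ℚ)) :
    evalHom (phiAB (PowerSeries.C (R := (LaurentPolynomial ℚ)) (T 1)) B) Rser = walkSeriesF := by
  have hagree : ∀ m, phiAB (PowerSeries.C (R := (LaurentPolynomial ℚ)) (T 1)) B
      (PowerSeries.coeff (R := Spoly) m Rser)
      = ((PowerSeries.C (R := (LaurentPolynomial ℚ))).comp rhoF) (PowerSeries.coeff (R := Spoly) m Rser) := by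
    intro m
    rw [Rser, PowerSeries.coeff_mk, Rcoeff, map_sum, map_sum]
    refine Finset.sum_congr rfl fun s _ => ?_
    rw [map_pow, map_pow, phiAB_X0, RingHom.comp_apply]
    have : rhoF (MvPolynomial.X 0) = T 1 := by simp [rhoF]
    rw [this]
  rw [evalHom_mk_congr _ _ hagree, evalHom_comp_C]
  have : (fun n => rhoF (PowerSeries.coeff (R := Spoly) n Rser)) = fun n => rhoF (Rcoeff n) :=
    funext fun n => by rw [Rser, PowerSeries.coeff_mk]
  rw [this, evalR_walkSeriesF]

lemma evalQ_G (A : PowerSeries (LaurentPolynomial ℚ)) :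
    evalHom (phiAB A (PowerSeries.C (R := (LaurentPolynomial ℚ)) (T (-1)))) Qser = walkSeriesG := by
  have hagree : ∀ m, phiAB A (PowerSeries.C (R := (LaurentPolynomial ℚ)) (T (-1)))
      (PowerSeries.coeff (R := Spoly) m Qser)
      = ((PowerSeries.C (R := (LaurentPolynomial ℚ))).comp rhoG) (PowerSeries.coeff (R := Spoly) m Qser) := by
    intro m
    rw [Qser, PowerSeries.coeff_mk, Qcoeff, map_sum, map_sum]
    refine Finset.sum_congr rfl fun s _ => ?_
    rw [map_pow, map_pow, phiAB_X1, RingHom.comp_apply]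
    have : rhoG (MvPolynomial.X 1) = T (-1) := by simp [rhoG]
    rw [this]
  rw [evalHom_mk_congr _ _ hagree, evalHom_comp_C]
  have : (fun n => rhoG (PowerSeries.coeff (R := Spoly) n Qser)) = fun n => rhoG (Qcoeff n) :=
    funext fun n => by rw [Qser, PowerSeries.coeff_mk]
  rw [this, evalQ_walkSeriesG]

lemma kernel_pair (A B : PowerSeries (LaurentPolynomial ℚ))
    (hk : A * B = PowerSeries.X * ((1 + A) * (A + B) * (1 + B))) :
    A ^ 2 * B = PowerSeries.X * (B + B ^ 2) * evalHom (phiAB A B) Qser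
      + PowerSeries.X * (A + A ^ 2) * evalHom (phiAB A B) Rser := by
  have h := subst_master A B
  linear_combination evalHom (phiAB A B) Hser * hk - h


/-- The kernel identity: if `Y ∈ ℚ[x,x⁻¹][[u]]` has constant term `0` and satisfies
`Y = u (1 + x⁻¹)(x + Y)(1 + Y)`, then
`x² Y − x⁻² Y³ + x⁻³ Y² = u x(x+1) F + u x⁻¹(x⁻¹+1) G`. -/
theorem kernel_identity (Y : PowerSeries (LaurentPolynomial ℚ))
    (hY0 : PowerSeries.constantCoeff (R := (LaurentPolynomial ℚ)) Y = 0)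
    (hY : Y = PowerSeries.X * PowerSeries.C (R := (LaurentPolynomial ℚ)) (1 + T (-1)) *
        (PowerSeries.C (R := (LaurentPolynomial ℚ)) (T 1) + Y) * (1 + Y)) :
    PowerSeries.C (R := (LaurentPolynomial ℚ)) (T 2) * Y -
        PowerSeries.C (R := (LaurentPolynomial ℚ)) (T (-2)) * Y ^ 3 +
        PowerSeries.C (R := (LaurentPolynomial ℚ)) (T (-3)) * Y ^ 2 =
      PowerSeries.X * PowerSeries.C (R := (LaurentPolynomial ℚ)) (T 1 * (T 1 + 1)) * walkSeriesF +
        PowerSeries.X * PowerSeries.C (R := (LaurentPolynomial ℚ)) (T (-1) * (T (-1) + 1)) *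
          walkSeriesG := by
  set xh := PowerSeries.C (R := (LaurentPolynomial ℚ)) (T 1) with hxh
  set xl := PowerSeries.C (R := (LaurentPolynomial ℚ)) (T (-1)) with hxl
  have hinv : xh * xl = 1 := by
    rw [hxh, hxl, ← map_mul, ← T_add]
    norm_num
  have hy : Y = PowerSeries.X * (1 + xl) * (xh + Y) * (1 + Y) := by
    have hC : PowerSeries.C (R := (LaurentPolynomial ℚ)) (1 + T (-1)) = 1 + xl := by
      rw [hxl, map_add, map_one]
    have hy' := hY
    rw [hC] at hy'
    exact hy'
  have k1 : xh * Y = PowerSeries.X * ((1 + xh) * (xh + Y) * (1 + Y)) := by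
    linear_combination xh * hy + PowerSeries.X * (xh + Y) * (1 + Y) * hinv
  have k2 : (xl * Y) * xl = PowerSeries.X *
      ((1 + xl * Y) * (xl * Y + xl) * (1 + xl)) := by
    linear_combination xl * xl * hy + PowerSeries.X * (1 + xl) * (1 + Y) * xl * hinv
  have k3 : (xl * Y) * Y = PowerSeries.X *
      ((1 + xl * Y) * (xl * Y + Y) * (1 + Y)) := by
    linear_combination xl * Y * hy + PowerSeries.X * (1 + Y) * (1 + xl) * Y * hinv
  have e1 := kernel_pair xh Y k1
  have e2 := kernel_pair (xl * Y) xl k2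
  have e3 := kernel_pair (xl * Y) Y k3
  rw [evalR_F Y] at e1
  rw [evalQ_G (xl * Y)] at e2
  rw [evalQ_indep xh (xl * Y) Y] at e1
  rw [evalR_indep (xl * Y) xl Y] at e2
  have g2 : PowerSeries.C (R := (LaurentPolynomial ℚ)) (T 2) = xh * xh := by
    rw [hxh, ← map_mul, ← T_add]
    norm_num
  have gm2 : PowerSeries.C (R := (LaurentPolynomial ℚ)) (T (-2)) = xl * xl := by
    rw [hxl, ← map_mul, ← T_add]
    norm_num
  have gm3 : PowerSeries.C (R := (LaurentPolynomial ℚ)) (T (-3)) = xl * xl * xl := by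
    rw [hxl, ← map_mul, ← map_mul, ← T_add, ← T_add]
    norm_num
  have gF : PowerSeries.C (R := (LaurentPolynomial ℚ)) (T 1 * (T 1 + 1)) = xh * (xh + 1) := by
    rw [hxh, map_mul, map_add, map_one]
  have gG : PowerSeries.C (R := (LaurentPolynomial ℚ)) (T (-1) * (T (-1) + 1)) = xl * (xl + 1) := by
    rw [hxl, map_mul, map_add, map_one]
  rw [g2, gm2, gm3, gF, gG]
  linear_combination e1 + e2 - e3
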